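/- If T is a torsion graded module and N is any graded module over a commutative positively graded connected K-algebra A, then Tor_1^A(T, N) is a torsion graded module. -/

import Mathlib

/-!
STATEMENT 3.  If `T` is a torsion graded module and `N` is any graded module over a
commutative positively graded connected `K`-algebra `A`, then `Tor₁^A(T, N)` is a torsion
module.
-/

open CategoryTheory

/-- `m` is a torsion element: `A_k • m = 0` for all sufficiently large `k`. -/
def IsTorsionElt {K A : Type} [Field K] [CommRing A] [Algebra K A]
    (𝒜 : ℤ → Submodule K A) {M : Type} [AddCommGroup M] [Module A M] (m : M) : Prop :=
  ∃ N : ℤ, ∀ k : ℤ, N < k → ∀ a ∈ 𝒜 k, a • m = 0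

section Aux

variable {K A : Type} [Field K] [CommRing A] [Algebra K A] (𝒜 : ℤ → Submodule K A)

lemma isTorsionElt_map {M M' : Type} [AddCommGroup M] [Module A M]
    [AddCommGroup M'] [Module A M'] (f : M →ₗ[A] M') {m : M}
    (hm : IsTorsionElt 𝒜 m) : IsTorsionElt 𝒜 (f m) := by
  obtain ⟨n, hn⟩ := hm
  exact ⟨n, fun k hk a ha => by rw [← map_smul, hn k hk a ha, map_zero]⟩

lemma isTorsionElt_of_injective {M M' : Type} [AddCommGroup M] [Module A M]
    [AddCommGroup M'] [Module A M'] (f : M →ₗ[A] M') (hf : Function.Injective f)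
    {m : M} (hm : IsTorsionElt 𝒜 (f m)) : IsTorsionElt 𝒜 m := by
  obtain ⟨n, hn⟩ := hm
  refine ⟨n, fun k hk a ha => hf ?_⟩
  rw [map_smul, hn k hk a ha, map_zero]

lemma isTorsionElt_tensor {T M : Type} [AddCommGroup T] [Module A T]
    [AddCommGroup M] [Module A M] (hT : ∀ t : T, IsTorsionElt 𝒜 t)
    (x : TensorProduct A T M) : IsTorsionElt 𝒜 x := by
  induction x using TensorProduct.induction_on with
  | zero => exact ⟨0, fun k _ a _ => smul_zero a⟩
  | tmul t m =>
      obtain ⟨n, hn⟩ := hT t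
      exact ⟨n, fun k hk a ha => by
        rw [TensorProduct.smul_tmul', hn k hk a ha, TensorProduct.zero_tmul]⟩
  | add x y hx hy =>
      obtain ⟨n1, h1⟩ := hx
      obtain ⟨n2, h2⟩ := hy
      exact ⟨max n1 n2, fun k hk a ha => by
        rw [smul_add, h1 k (lt_of_le_of_lt (le_max_left _ _) hk) a ha,
          h2 k (lt_of_le_of_lt (le_max_right _ _) hk) a ha, add_zero]⟩

end Aux

theorem tor_one_torsion_of_torsion
    {K A : Type} [Field K] [CommRing A] [Algebra K A]
    (𝒜 : ℤ → Submodule K A) [GradedAlgebra 𝒜]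
    -- `A` is positively graded and connected
    (hpos : ∀ i : ℤ, i < 0 → 𝒜 i = ⊥)
    (hconn : ∀ a ∈ 𝒜 0, ∃ c : K, a = algebraMap K A c)
    (T N : Type) [AddCommGroup T] [Module A T] [AddCommGroup N] [Module A N]
    -- `T` is a torsion module
    (hT : ∀ t : T, IsTorsionElt 𝒜 t) :
    ∀ x : ((Tor (ModuleCat.{0} A) 1).obj (ModuleCat.of A T)).obj (ModuleCat.of A N),
      IsTorsionElt 𝒜 x := by
  intro x
  set F := (MonoidalCategory.tensoringLeft (ModuleCat.{0} A)).obj (ModuleCat.of A T) with hF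
  obtain ⟨P⟩ : Nonempty (ProjectiveResolution (ModuleCat.of A N)) :=
    HasProjectiveResolution.out
  let e := P.isoLeftDerivedObj F 1
  let C := (F.mapHomologicalComplex (ComplexShape.down ℕ)).obj P.complex
  -- `x` lives in `(F.leftDerived 1).obj (of A N)`, isomorphic to homology of `C` at 1.
  have hx : x = e.inv (e.hom x) := by
    change x = (e.hom ≫ e.inv).hom x
    rw [e.hom_inv_id]
    rfl
  -- `homologyπ` is surjective
  have hπ : Function.Surjective (C.homologyπ 1) :=
    (ModuleCat.epi_iff_surjective _).mp inferInstance
  obtain ⟨z, hz⟩ := hπ (e.hom x)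
  have hi : Function.Injective (C.iCycles 1) :=
    (ModuleCat.mono_iff_injective _).mp inferInstance
  have hzt : IsTorsionElt 𝒜 z := by
    refine isTorsionElt_of_injective 𝒜 (C.iCycles 1).hom hi ?_
    exact isTorsionElt_tensor 𝒜 hT ((C.iCycles 1) z)
  rw [hx, ← hz]
  exact isTorsionElt_map 𝒜 e.inv.hom
    (isTorsionElt_map 𝒜 (C.homologyπ 1).hom hzt)
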